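/- The special elliptic formal group law F(x,y) = (x + y - μ₁xy)·(1 + μ₂xy)⁻¹ over the polynomial ring ℤ[μ₁,μ₂] is a one-dimensional commutative formal group law: F(x,0) = x, F(0,y) = y, F(x,y) = F(y,x), and F(F(x,y),z) = F(x,F(y,z)) as formal power series in ℤ[μ₁,μ₂][[x,y,z]]. -/

import Mathlib

/-!
Formal group law preliminaries: substitution of (multivariate) formal power series,
the definition of a one-dimensional commutative formal group law, its formal inverse,
and the formal difference `x -_F y := F(x, ι(y))`.
-/

noncomputable section

open MvPowerSeries

/-- Substitution `f(a 0, a 1, …)` of multivariate power series (the intended use is when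
each `a i` has zero constant coefficient): the coefficient at `e` only receives
contributions from monomials of `f` with exponent `d` such that each `d i` is at most the
total degree of `e`. -/
def MvPowerSeries.substSeries {σ τ R : Type*} [Fintype σ] [DecidableEq σ] [CommRing R]
    (a : σ → MvPowerSeries τ R) (f : MvPowerSeries σ R) : MvPowerSeries τ R :=
  fun e => ∑ d ∈ Finset.Iic (Finsupp.equivFunOnFinite.symm fun _ : σ => e.sum fun _ n => n),
    MvPowerSeries.coeff (R := R) d f * MvPowerSeries.coeff (R := R) e (∏ i, (a i) ^ d i)

set_option linter.unusedSectionVars false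

namespace SubstAux

variable {σ τ R : Type*} [Fintype σ] [DecidableEq σ] [CommRing R]

/-- total degree -/
def deg {τ : Type*} (e : τ →₀ ℕ) : ℕ := e.sum fun _ n => n

lemma deg_add (e1 e2 : τ →₀ ℕ) : deg (e1 + e2) = deg e1 + deg e2 :=
  Finsupp.sum_add_index' (fun _ => rfl) (fun _ _ _ => rfl)

lemma one_le_deg {e : τ →₀ ℕ} (h : e ≠ 0) : 1 ≤ deg e := by
  rw [Nat.one_le_iff_ne_zero]
  simp [deg, Finsupp.sum, Finset.sum_eq_zero_iff]
  exact (Finsupp.ne_iff.mp h).imp fun i hi => by simpa using hi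

/-- the bound appearing in `substSeries` -/
def B (e : τ →₀ ℕ) : σ →₀ ℕ := Finsupp.equivFunOnFinite.symm fun _ : σ => deg e

@[simp] lemma B_apply (e : τ →₀ ℕ) (i : σ) : (B e : σ →₀ ℕ) i = deg e := rfl

lemma coeff_substSeries (a : σ → MvPowerSeries τ R) (f : MvPowerSeries σ R) (e : τ →₀ ℕ) :
    coeff (R := R) e (substSeries a f) =
      ∑ d ∈ Finset.Iic (B (σ := σ) e), coeff (R := R) d f * coeff (R := R) e (∏ i, (a i) ^ d i) := rfl

/-- vanishing of coefficients below degree m -/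
def Van (m : ℕ) (g : MvPowerSeries τ R) : Prop := ∀ e : τ →₀ ℕ, deg e < m → coeff (R := R) e g = 0

lemma van_zero (g : MvPowerSeries τ R) : Van 0 g := fun _ h => absurd h (Nat.not_lt_zero _)

lemma van_one {g : MvPowerSeries τ R} (h : constantCoeff (σ := τ) (R := R) g = 0) : Van 1 g := by
  intro e he
  have he0 : e = 0 := by
    by_contra h0
    exact absurd (one_le_deg h0) (by omega)
  rw [he0, coeff_zero_eq_constantCoeff_apply]; exact h

lemma van_mul {m n : ℕ} {g h : MvPowerSeries τ R} (hg : Van m g) (hh : Van n h) :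
    Van (m + n) (g * h) := by
  classical
  intro e he
  rw [coeff_mul]
  refine Finset.sum_eq_zero fun p hp => ?_
  rw [Finset.HasAntidiagonal.mem_antidiagonal] at hp
  by_cases h1 : deg p.1 < m
  · rw [hg _ h1, zero_mul]
  · have h2 : deg p.2 < n := by
      have := deg_add p.1 p.2
      rw [hp] at this; omega
    rw [hh _ h2, mul_zero]

lemma van_pow {g : MvPowerSeries τ R} (h : constantCoeff (σ := τ) (R := R) g = 0) (n : ℕ) : Van n (g ^ n) := by
  induction n with
  | zero => exact van_zero _
  | succ k ih => rw [pow_succ]; exact van_mul ih (van_one h)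

lemma van_prod_pow {a : σ → MvPowerSeries τ R} (ha : ∀ i, constantCoeff (σ := τ) (R := R) (a i) = 0)
    (d : σ →₀ ℕ) : Van (∑ i, d i) (∏ i, (a i) ^ d i) := by
  classical
  induction (Finset.univ : Finset σ) using Finset.induction with
  | empty => simpa using van_zero (R := R) (1 : MvPowerSeries τ R)
  | @insert j s hj ih =>
    rw [Finset.sum_insert hj, Finset.prod_insert hj]
    exact van_mul (van_pow (ha j) (d j)) ih

lemma coeff_prod_pow_eq_zero {a : σ → MvPowerSeries τ R}
    (ha : ∀ i, constantCoeff (σ := τ) (R := R) (a i) = 0) {d : σ →₀ ℕ} {e : τ →₀ ℕ}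
    (h : deg e < ∑ i, d i) : coeff (R := R) e (∏ i, (a i) ^ d i) = 0 :=
  van_prod_pow ha d e h

lemma deg_lt_of_not_mem_Iic {d : σ →₀ ℕ} {e : τ →₀ ℕ} {c : ℕ} (hc : deg e ≤ c)
    (hd : d ∉ Finset.Iic (Finsupp.equivFunOnFinite.symm fun _ : σ => c)) :
    deg e < ∑ i, d i := by
  rw [Finset.mem_Iic, Finsupp.le_def, not_forall] at hd
  obtain ⟨i, hi⟩ := hd
  have h1 : c < d i := by simpa using hi
  have h2 : d i ≤ ∑ j, d j := Finset.single_le_sum (fun _ _ => Nat.zero_le _) (Finset.mem_univ i)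
  omega

/-- Extension lemma: the sum may be taken over any finset containing `Iic (B e)`. -/
lemma coeff_substSeries_eq_sum {a : σ → MvPowerSeries τ R}
    (ha : ∀ i, constantCoeff (σ := τ) (R := R) (a i) = 0) (f : MvPowerSeries σ R) (e : τ →₀ ℕ)
    {S : Finset (σ →₀ ℕ)} (hS : Finset.Iic (B (σ := σ) e) ⊆ S) :
    coeff (R := R) e (substSeries a f) = ∑ d ∈ S, coeff (R := R) d f * coeff (R := R) e (∏ i, (a i) ^ d i) := by
  rw [coeff_substSeries]
  refine Finset.sum_subset hS fun d _ hd => ?_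
  rw [coeff_prod_pow_eq_zero ha (deg_lt_of_not_mem_Iic le_rfl hd), mul_zero]

variable {a : σ → MvPowerSeries τ R}

lemma prod_pow_add (d1 d2 : σ →₀ ℕ) :
    (∏ i, (a i) ^ (d1 + d2) i) = (∏ i, (a i) ^ d1 i) * ∏ i, (a i) ^ d2 i := by
  rw [← Finset.prod_mul_distrib]
  exact Finset.prod_congr rfl fun i _ => by rw [Finsupp.add_apply, pow_add]

lemma prod_pow_single (i : σ) : (∏ j, (a j) ^ (Finsupp.single i 1 : σ →₀ ℕ) j) = a i := by
  refine (Finset.prod_eq_single i (fun j _ hj => ?_) (fun h => absurd (Finset.mem_univ i) h)).trans ?_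
  · rw [Finsupp.single_apply, if_neg fun h => hj h.symm, pow_zero]
  · rw [Finsupp.single_apply, if_pos rfl, pow_one]

lemma substSeries_zero : substSeries a (0 : MvPowerSeries σ R) = 0 := by
  ext e
  rw [coeff_substSeries]
  simp

lemma substSeries_add (f g : MvPowerSeries σ R) :
    substSeries a (f + g) = substSeries a f + substSeries a g := by
  ext e
  rw [map_add, coeff_substSeries, coeff_substSeries, coeff_substSeries,
    ← Finset.sum_add_distrib]
  exact Finset.sum_congr rfl fun d _ => by rw [map_add, add_mul]

lemma substSeries_C (r : R) : substSeries a (C (σ := σ) (R := R) r) = C (σ := τ) (R := R) r := by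
  classical
  ext e
  rw [coeff_substSeries, Finset.sum_eq_single 0]
  · simp [coeff_C, coeff_one, apply_ite (r * ·)]
  · intro d _ hd
    rw [coeff_C, if_neg hd, zero_mul]
  · intro h
    exact absurd (Finset.mem_Iic.mpr (zero_le)) h

lemma substSeries_one : substSeries a (1 : MvPowerSeries σ R) = 1 := by
  rw [← map_one (C (σ := σ) (R := R)), substSeries_C, map_one]

lemma substSeries_X (ha : ∀ i, constantCoeff (σ := τ) (R := R) (a i) = 0) (i : σ) :
    substSeries a (X i) = a i := by
  classical
  ext e
  rw [coeff_substSeries, Finset.sum_eq_single (Finsupp.single i 1)]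
  · rw [coeff_X, if_pos rfl, one_mul, prod_pow_single]
  · intro d _ hd
    rw [coeff_X, if_neg hd, zero_mul]
  · intro hnot
    have h1 : deg e < ∑ j, (Finsupp.single i 1 : σ →₀ ℕ) j :=
      deg_lt_of_not_mem_Iic le_rfl hnot
    have hs : ∑ j, (Finsupp.single i 1 : σ →₀ ℕ) j = 1 := by
      rw [Finset.sum_eq_single i (fun j _ hj => by
        rw [Finsupp.single_apply, if_neg fun h => hj h.symm])
        (fun h => absurd (Finset.mem_univ i) h), Finsupp.single_apply, if_pos rfl]
    have he0 : e = 0 := by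
      by_contra h0
      have := one_le_deg h0
      omega
    rw [prod_pow_single, he0, coeff_zero_eq_constantCoeff_apply, ha i, mul_zero]

lemma constantCoeff_substSeries (f : MvPowerSeries σ R) :
    constantCoeff (σ := τ) (R := R) (substSeries a f) = constantCoeff (σ := σ) (R := R) f := by
  classical
  rw [← coeff_zero_eq_constantCoeff_apply, ← coeff_zero_eq_constantCoeff_apply,
    coeff_substSeries, Finset.sum_eq_single 0]
  · simp
  · intro d hd hd0
    refine absurd (Finsupp.ext fun j => Nat.le_zero.mp ?_) hd0
    have := Finset.mem_Iic.mp hd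
    have h2 := Finsupp.le_def.mp this j
    simpa [deg] using h2
  · intro h
    exact absurd (Finset.mem_Iic.mpr (zero_le)) h

lemma B_add_B (e : τ →₀ ℕ) :
    B (σ := σ) e + B e = Finsupp.equivFunOnFinite.symm (fun _ : σ => deg e + deg e) := by
  ext j
  simp [B]

theorem substSeries_mul (ha : ∀ i, constantCoeff (σ := τ) (R := R) (a i) = 0) (f g : MvPowerSeries σ R) :
    substSeries a (f * g) = substSeries a f * substSeries a g := by
  classical
  ext e
  set D : Finset (σ →₀ ℕ) := Finset.Iic (B (σ := σ) e + B (σ := σ) e) with hDdef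
  have hBD : Finset.Iic (B (σ := σ) e) ⊆ D :=
    Finset.Iic_subset_Iic.mpr le_self_add
  have hsub : ∀ q : (τ →₀ ℕ) × (τ →₀ ℕ), q ∈ Finset.HasAntidiagonal.antidiagonal e →
      ∀ u : τ →₀ ℕ, u = q.1 ∨ u = q.2 → Finset.Iic (B (σ := σ) u) ⊆ D := by
    intro q hq u hu
    refine Finset.Iic_subset_Iic.mpr (Finsupp.le_def.mpr fun j => ?_)
    rw [Finset.HasAntidiagonal.mem_antidiagonal] at hq
    have hle : deg u ≤ deg e := by
      have := deg_add q.1 q.2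
      rw [hq] at this
      rcases hu with h | h <;> subst h <;> omega
    simp only [B_apply, Finsupp.add_apply, B_apply]
    omega
  -- common expression
  have goal1 : coeff (R := R) e (substSeries a (f * g)) =
      ∑ p ∈ D ×ˢ D, coeff (R := R) p.1 f * coeff (R := R) p.2 g * coeff (R := R) e (∏ i, (a i) ^ (p.1 + p.2) i) := by
    rw [coeff_substSeries_eq_sum ha (f * g) e hBD]
    calc ∑ d ∈ D, coeff (R := R) d (f * g) * coeff (R := R) e (∏ i, (a i) ^ d i)
        = ∑ d ∈ D, ∑ p ∈ Finset.HasAntidiagonal.antidiagonal d,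
            coeff (R := R) p.1 f * coeff (R := R) p.2 g * coeff (R := R) e (∏ i, (a i) ^ d i) := by
          refine Finset.sum_congr rfl fun d _ => ?_
          rw [coeff_mul d f g, Finset.sum_mul]
      _ = ∑ x ∈ D.sigma (fun d => Finset.HasAntidiagonal.antidiagonal d),
            coeff (R := R) x.snd.1 f * coeff (R := R) x.snd.2 g * coeff (R := R) e (∏ i, (a i) ^ x.fst i) := by
          rw [Finset.sum_sigma]
      _ = ∑ p ∈ (D ×ˢ D).filter (fun p => p.1 + p.2 ∈ D),
            coeff (R := R) p.1 f * coeff (R := R) p.2 g * coeff (R := R) e (∏ i, (a i) ^ (p.1 + p.2) i) := by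
          refine Finset.sum_bij' (fun x _ => x.snd) (fun p _ => ⟨p.1 + p.2, p⟩) ?_ ?_ ?_ ?_ ?_
          · intro x hx
            rw [Finset.mem_sigma, Finset.HasAntidiagonal.mem_antidiagonal] at hx
            obtain ⟨hx1, hx2⟩ := hx
            rw [Finset.mem_filter, Finset.mem_product, hx2]
            have hle1 : x.snd.1 ≤ x.fst := hx2 ▸ le_add_of_nonneg_right (zero_le)
            have hle2 : x.snd.2 ≤ x.fst := hx2 ▸ le_add_of_nonneg_left (zero_le)
            exact ⟨⟨Finset.mem_Iic.mpr (le_trans hle1 (Finset.mem_Iic.mp hx1)),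
              Finset.mem_Iic.mpr (le_trans hle2 (Finset.mem_Iic.mp hx1))⟩, hx1⟩
          · intro p hp
            rw [Finset.mem_filter] at hp
            rw [Finset.mem_sigma, Finset.HasAntidiagonal.mem_antidiagonal]
            exact ⟨hp.2, rfl⟩
          · intro x hx
            rw [Finset.mem_sigma, Finset.HasAntidiagonal.mem_antidiagonal] at hx
            exact Sigma.ext hx.2 (by simp)
          · intro p _
            rfl
          · intro x hx
            rw [Finset.mem_sigma, Finset.HasAntidiagonal.mem_antidiagonal] at hx
            rw [hx.2]
      _ = ∑ p ∈ D ×ˢ D,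
            coeff (R := R) p.1 f * coeff (R := R) p.2 g * coeff (R := R) e (∏ i, (a i) ^ (p.1 + p.2) i) := by
          refine Finset.sum_subset (Finset.filter_subset _ _) fun p hp hnp => ?_
          rw [Finset.mem_filter, not_and] at hnp
          have hnmem : p.1 + p.2 ∉ Finset.Iic
              (Finsupp.equivFunOnFinite.symm fun _ : σ => deg e + deg e) := by
            rw [← B_add_B]
            exact hnp hp
          rw [coeff_prod_pow_eq_zero ha (deg_lt_of_not_mem_Iic le_self_add hnmem), mul_zero]
  have goal2 : coeff (R := R) e (substSeries a f * substSeries a g) =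
      ∑ p ∈ D ×ˢ D, coeff (R := R) p.1 f * coeff (R := R) p.2 g * coeff (R := R) e (∏ i, (a i) ^ (p.1 + p.2) i) := by
    rw [coeff_mul e (substSeries a f) (substSeries a g)]
    calc ∑ q ∈ Finset.HasAntidiagonal.antidiagonal e, coeff (R := R) q.1 (substSeries a f) * coeff (R := R) q.2 (substSeries a g)
        = ∑ q ∈ Finset.HasAntidiagonal.antidiagonal e, ∑ p ∈ D ×ˢ D,
            (coeff (R := R) p.1 f * coeff (R := R) q.1 (∏ i, (a i) ^ p.1 i)) *
            (coeff (R := R) p.2 g * coeff (R := R) q.2 (∏ i, (a i) ^ p.2 i)) := by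
          refine Finset.sum_congr rfl fun q hq => ?_
          rw [coeff_substSeries_eq_sum ha f q.1 (hsub q hq q.1 (Or.inl rfl)),
            coeff_substSeries_eq_sum ha g q.2 (hsub q hq q.2 (Or.inr rfl)),
            Finset.sum_mul_sum, ← Finset.sum_product']
      _ = ∑ p ∈ D ×ˢ D, ∑ q ∈ Finset.HasAntidiagonal.antidiagonal e,
            (coeff (R := R) p.1 f * coeff (R := R) q.1 (∏ i, (a i) ^ p.1 i)) *
            (coeff (R := R) p.2 g * coeff (R := R) q.2 (∏ i, (a i) ^ p.2 i)) := Finset.sum_comm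
      _ = ∑ p ∈ D ×ˢ D,
            coeff (R := R) p.1 f * coeff (R := R) p.2 g * coeff (R := R) e (∏ i, (a i) ^ (p.1 + p.2) i) := by
          refine Finset.sum_congr rfl fun p _ => ?_
          rw [prod_pow_add, coeff_mul e, Finset.mul_sum]
          exact Finset.sum_congr rfl fun q _ => by ring
  rw [goal1, goal2]

/-- Substitution as a ring homomorphism. -/
def substHom (ha : ∀ i, constantCoeff (σ := τ) (R := R) (a i) = 0) :
    MvPowerSeries σ R →+* MvPowerSeries τ R where
  toFun := substSeries a
  map_one' := substSeries_one
  map_mul' := substSeries_mul ha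
  map_zero' := substSeries_zero
  map_add' := substSeries_add

@[simp] lemma substHom_apply (ha : ∀ i, constantCoeff (σ := τ) (R := R) (a i) = 0) (f : MvPowerSeries σ R) :
    substHom ha f = substSeries a f := rfl

end SubstAux

open SubstAux

/-- A one-dimensional commutative formal group law over a commutative ring `R`:
a power series `F ∈ R[[x,y]]` with `F(x,0) = x`, `F(0,y) = y`, `F(x,y) = F(y,x)` and
`F(F(x,y),z) = F(x,F(y,z))` (an identity of power series in `R[[x,y,z]]`). -/
structure IsFormalGroupLaw (R : Type*) [CommRing R] (F : MvPowerSeries (Fin 2) R) : Prop where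
  subst_zero_right :
    MvPowerSeries.substSeries (![X 0, 0] : Fin 2 → MvPowerSeries (Fin 2) R) F = X 0
  subst_zero_left :
    MvPowerSeries.substSeries (![0, X 1] : Fin 2 → MvPowerSeries (Fin 2) R) F = X 1
  comm :
    MvPowerSeries.substSeries (![X 1, X 0] : Fin 2 → MvPowerSeries (Fin 2) R) F = F
  assoc :
    MvPowerSeries.substSeries
      (![MvPowerSeries.substSeries (![X 0, X 1] : Fin 2 → MvPowerSeries (Fin 3) R) F, X 2] :
        Fin 2 → MvPowerSeries (Fin 3) R) F
    = MvPowerSeries.substSeries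
      (![X 0, MvPowerSeries.substSeries (![X 1, X 2] : Fin 2 → MvPowerSeries (Fin 3) R) F] :
        Fin 2 → MvPowerSeries (Fin 3) R) F

/-- `ι` is the formal inverse of the formal group law `F`: a univariate power series with
zero constant term such that `F(x, ι(x)) = 0`. -/
def IsFormalInverse {R : Type*} [CommRing R] (F : MvPowerSeries (Fin 2) R)
    (ι : PowerSeries R) : Prop :=
  PowerSeries.constantCoeff (R := R) ι = 0 ∧
    MvPowerSeries.substSeries (![PowerSeries.X, ι] : Fin 2 → PowerSeries R) F = 0

/-- The formal difference `x -_F y := F(x, ι(y))`. -/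
def fDiff {R : Type*} [CommRing R] (F : MvPowerSeries (Fin 2) R) (ι : PowerSeries R) :
    MvPowerSeries (Fin 2) R :=
  MvPowerSeries.substSeries
    (![X 0, MvPowerSeries.substSeries (fun _ : Unit => (X 1 : MvPowerSeries (Fin 2) R)) ι] :
      Fin 2 → MvPowerSeries (Fin 2) R) F

/-- The formal difference `y -_F x := F(y, ι(x))`. -/
def fDiffSwap {R : Type*} [CommRing R] (F : MvPowerSeries (Fin 2) R) (ι : PowerSeries R) :
    MvPowerSeries (Fin 2) R :=
  MvPowerSeries.substSeries
    (![X 1, MvPowerSeries.substSeries (fun _ : Unit => (X 0 : MvPowerSeries (Fin 2) R)) ι] :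
      Fin 2 → MvPowerSeries (Fin 2) R) F

/-- The base ring `ℤ[μ₁, μ₂]` of the special elliptic formal group law. -/
abbrev Rse : Type := MvPolynomial (Fin 2) ℤ

/-- The element `μ₁ ∈ ℤ[μ₁, μ₂]`. -/
def μ₁ : Rse := MvPolynomial.X 0

/-- The element `μ₂ ∈ ℤ[μ₁, μ₂]`. -/
def μ₂ : Rse := MvPolynomial.X 1

/-- The special elliptic formal group law
`F(x,y) = (x + y - μ₁xy)·(1 + μ₂xy)⁻¹ ∈ ℤ[μ₁,μ₂][[x,y]]`, where the inverse of the
power series `1 + μ₂xy` (whose constant coefficient is the unit `1`) is taken via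
`MvPowerSeries.invOfUnit`. -/
def Fse : MvPowerSeries (Fin 2) Rse :=
  (X 0 + X 1 - C (σ := (Fin 2)) (R := Rse) μ₁ * (X 0 * X 1)) *
    MvPowerSeries.invOfUnit (1 + C (σ := (Fin 2)) (R := Rse) μ₂ * (X 0 * X 1)) 1

/-- The formal inverse `ι(x) = -x·(1 - μ₁x)⁻¹ ∈ ℤ[μ₁,μ₂][[x]]` of the special elliptic
formal group law, where the inverse of `1 - μ₁x` is taken via `PowerSeries.invOfUnit`. -/
def ιse : PowerSeries Rse :=
  -(PowerSeries.X) * PowerSeries.invOfUnit (1 - PowerSeries.C (R := Rse) μ₁ * PowerSeries.X) 1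

section Helpers

open SubstAux

lemma cancel_aux {S : Type*} [CommRing S] {x y t t' : S} (h1 : x * t = y * t)
    (h2 : t * t' = 1) : x = y := by
  calc x = x * (t * t') := by rw [h2, mul_one]
    _ = (x * t) * t' := by ring
    _ = (y * t) * t' := by rw [h1]
    _ = y * (t * t') := by ring
    _ = y := by rw [h2, mul_one]

lemma mul_inv_mul_aux {S : Type*} [CommRing S] {q i : S} (h : q * i = 1) (x : S) :
    x * i * q = x := by
  rw [mul_assoc, mul_comm i q, h, mul_one]

lemma key_mul {τ : Type*} (a : Fin 2 → MvPowerSeries τ Rse)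
    (ha : ∀ i, MvPowerSeries.constantCoeff (σ := τ) (R := Rse) (a i) = 0) :
    MvPowerSeries.substSeries a Fse * (1 + C (σ := τ) (R := Rse) μ₂ * (a 0 * a 1)) =
      a 0 + a 1 - C (σ := τ) (R := Rse) μ₁ * (a 0 * a 1) := by
  have hQ : SubstAux.substHom ha (1 + C (σ := (Fin 2)) (R := Rse) μ₂ * (X 0 * X 1)) =
      1 + C (σ := τ) (R := Rse) μ₂ * (a 0 * a 1) := by
    simp only [map_add, map_one, map_mul, SubstAux.substHom_apply, SubstAux.substSeries_C,
      SubstAux.substSeries_X ha]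
  have hP : SubstAux.substHom ha (X 0 + X 1 - C (σ := (Fin 2)) (R := Rse) μ₁ * (X 0 * X 1)) =
      a 0 + a 1 - C (σ := τ) (R := Rse) μ₁ * (a 0 * a 1) := by
    simp only [map_sub, map_add, map_mul, SubstAux.substHom_apply, SubstAux.substSeries_C,
      SubstAux.substSeries_X ha]
  have hinv : SubstAux.substHom ha (1 + C (σ := (Fin 2)) (R := Rse) μ₂ * (X 0 * X 1)) *
      SubstAux.substHom ha
        (MvPowerSeries.invOfUnit (1 + C (σ := (Fin 2)) (R := Rse) μ₂ * (X 0 * X 1)) 1) = 1 := by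
    rw [← map_mul, MvPowerSeries.mul_invOfUnit _ _ (by simp), map_one]
  have hF : MvPowerSeries.substSeries a Fse =
      SubstAux.substHom ha (X 0 + X 1 - C (σ := (Fin 2)) (R := Rse) μ₁ * (X 0 * X 1)) *
      SubstAux.substHom ha
        (MvPowerSeries.invOfUnit (1 + C (σ := (Fin 2)) (R := Rse) μ₂ * (X 0 * X 1)) 1) := by
    exact map_mul (SubstAux.substHom ha) _ _
  rw [hF, ← hQ, ← hP]
  exact mul_inv_mul_aux hinv _

lemma constantCoeff_Fse : MvPowerSeries.constantCoeff (σ := (Fin 2)) (R := Rse) Fse = 0 := by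
  have h : Fse = (X 0 + X 1 - C (σ := (Fin 2)) (R := Rse) μ₁ * (X 0 * X 1)) *
      MvPowerSeries.invOfUnit (1 + C (σ := (Fin 2)) (R := Rse) μ₂ * (X 0 * X 1)) 1 := rfl
  have h0 : MvPowerSeries.constantCoeff (σ := (Fin 2)) (R := Rse)
      (X 0 + X 1 - C (σ := (Fin 2)) (R := Rse) μ₁ * (X 0 * X 1)) = 0 := by simp
  rw [h, map_mul, h0, zero_mul]

end Helpers

/-- The special elliptic formal group law
`F(x,y) = (x + y - μ₁xy)·(1 + μ₂xy)⁻¹` over `ℤ[μ₁,μ₂]` is a one-dimensional commutative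
formal group law: `F(x,0) = x`, `F(0,y) = y`, `F(x,y) = F(y,x)` and
`F(F(x,y),z) = F(x,F(y,z))` in `ℤ[μ₁,μ₂][[x,y,z]]`. -/

theorem specialElliptic_isFormalGroupLaw : IsFormalGroupLaw Rse Fse := by
  have hQinv : (1 + C (σ := (Fin 2)) (R := Rse) μ₂ * (X 0 * X 1)) *
      MvPowerSeries.invOfUnit (1 + C (σ := (Fin 2)) (R := Rse) μ₂ * (X 0 * X 1)) 1 = 1 :=
    MvPowerSeries.mul_invOfUnit _ _ (by simp)
  have hFQ : Fse * (1 + C (σ := (Fin 2)) (R := Rse) μ₂ * (X 0 * X 1)) =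
      X 0 + X 1 - C (σ := (Fin 2)) (R := Rse) μ₁ * (X 0 * X 1) := by
    have h : Fse = (X 0 + X 1 - C (σ := (Fin 2)) (R := Rse) μ₁ * (X 0 * X 1)) *
        MvPowerSeries.invOfUnit (1 + C (σ := (Fin 2)) (R := Rse) μ₂ * (X 0 * X 1)) 1 := rfl
    rw [h]
    exact mul_inv_mul_aux hQinv _
  constructor
  · -- F(x, 0) = x
    have ha : ∀ i, MvPowerSeries.constantCoeff (σ := (Fin 2)) (R := Rse)
        ((![X 0, 0] : Fin 2 → MvPowerSeries (Fin 2) Rse) i) = 0 := by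
      intro i; fin_cases i <;> simp
    have h := key_mul _ ha
    simp only [Matrix.cons_val_zero, Matrix.cons_val_one, Matrix.head_cons] at h
    simpa using h
  · -- F(0, y) = y
    have ha : ∀ i, MvPowerSeries.constantCoeff (σ := (Fin 2)) (R := Rse)
        ((![0, X 1] : Fin 2 → MvPowerSeries (Fin 2) Rse) i) = 0 := by
      intro i; fin_cases i <;> simp
    have h := key_mul _ ha
    simp only [Matrix.cons_val_zero, Matrix.cons_val_one, Matrix.head_cons] at h
    simpa using h
  · -- commutativity
    have ha : ∀ i, MvPowerSeries.constantCoeff (σ := (Fin 2)) (R := Rse)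
        ((![X 1, X 0] : Fin 2 → MvPowerSeries (Fin 2) Rse) i) = 0 := by
      intro i; fin_cases i <;> simp
    have h := key_mul _ ha
    simp only [Matrix.cons_val_zero, Matrix.cons_val_one, Matrix.head_cons] at h
    refine cancel_aux ?_ hQinv
    linear_combination h - hFQ
  · -- associativity
    have ha01 : ∀ i, MvPowerSeries.constantCoeff (σ := (Fin 3)) (R := Rse)
        ((![X 0, X 1] : Fin 2 → MvPowerSeries (Fin 3) Rse) i) = 0 := by
      intro i; fin_cases i <;> simp
    have ha12 : ∀ i, MvPowerSeries.constantCoeff (σ := (Fin 3)) (R := Rse)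
        ((![X 1, X 2] : Fin 2 → MvPowerSeries (Fin 3) Rse) i) = 0 := by
      intro i; fin_cases i <;> simp
    set G : MvPowerSeries (Fin 3) Rse :=
      MvPowerSeries.substSeries (![X 0, X 1] : Fin 2 → MvPowerSeries (Fin 3) Rse) Fse
      with hGdef
    set G' : MvPowerSeries (Fin 3) Rse :=
      MvPowerSeries.substSeries (![X 1, X 2] : Fin 2 → MvPowerSeries (Fin 3) Rse) Fse
      with hGdef'
    have hccG : MvPowerSeries.constantCoeff (σ := (Fin 3)) (R := Rse) G = 0 := by
      rw [hGdef]; exact (constantCoeff_substSeries _).trans constantCoeff_Fse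
    have hccG' : MvPowerSeries.constantCoeff (σ := (Fin 3)) (R := Rse) G' = 0 := by
      rw [hGdef']; exact (constantCoeff_substSeries _).trans constantCoeff_Fse
    have haL : ∀ i, MvPowerSeries.constantCoeff (σ := (Fin 3)) (R := Rse)
        ((![G, X 2] : Fin 2 → MvPowerSeries (Fin 3) Rse) i) = 0 := by
      intro i; fin_cases i <;> simp [hccG]
    have haR : ∀ i, MvPowerSeries.constantCoeff (σ := (Fin 3)) (R := Rse)
        ((![X 0, G'] : Fin 2 → MvPowerSeries (Fin 3) Rse) i) = 0 := by
      intro i; fin_cases i <;> simp [hccG']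
    have hG := key_mul _ ha01
    have hG' := key_mul _ ha12
    have hL := key_mul _ haL
    have hR := key_mul _ haR
    simp only [Matrix.cons_val_zero, Matrix.cons_val_one, Matrix.head_cons] at hG hG' hL hR
    rw [← hGdef] at hG
    rw [← hGdef'] at hG'
    set m1 : MvPowerSeries (Fin 3) Rse := C (σ := (Fin 3)) (R := Rse) μ₁ with hm1
    set m2 : MvPowerSeries (Fin 3) Rse := C (σ := (Fin 3)) (R := Rse) μ₂ with hm2
    have hA1 : (G + X 2 - m1 * (G * X 2)) * (1 + m2 * (X 0 * X 1)) =
        (X 0 + X 1 - m1 * (X 0 * X 1)) + X 2 * (1 + m2 * (X 0 * X 1))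
          - m1 * ((X 0 + X 1 - m1 * (X 0 * X 1)) * X 2) := by
      linear_combination (1 - m1 * X 2) * hG
    have hB1 : (1 + m2 * (G * X 2)) * (1 + m2 * (X 0 * X 1)) =
        (1 + m2 * (X 0 * X 1)) + m2 * ((X 0 + X 1 - m1 * (X 0 * X 1)) * X 2) := by
      linear_combination (m2 * X 2) * hG
    have hA2 : (X 0 + G' - m1 * (X 0 * G')) * (1 + m2 * (X 1 * X 2)) =
        X 0 * (1 + m2 * (X 1 * X 2)) + (X 1 + X 2 - m1 * (X 1 * X 2))
          - m1 * (X 0 * (X 1 + X 2 - m1 * (X 1 * X 2))) := by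
      linear_combination (1 - m1 * X 0) * hG'
    have hB2 : (1 + m2 * (X 0 * G')) * (1 + m2 * (X 1 * X 2)) =
        (1 + m2 * (X 1 * X 2)) + m2 * (X 0 * (X 1 + X 2 - m1 * (X 1 * X 2))) := by
      linear_combination (m2 * X 0) * hG'
    have h2 : ((1 + m2 * (G * X 2)) * (1 + m2 * (X 0 * G')) *
        (1 + m2 * (X 0 * X 1)) * (1 + m2 * (X 1 * X 2))) *
        MvPowerSeries.invOfUnit ((1 + m2 * (G * X 2)) * (1 + m2 * (X 0 * G')) *
          (1 + m2 * (X 0 * X 1)) * (1 + m2 * (X 1 * X 2))) 1 = 1 := by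
      refine MvPowerSeries.mul_invOfUnit _ _ ?_
      simp [hm1, hm2, hccG, hccG']
    refine cancel_aux ?_ h2
    linear_combination
      ((1 + m2 * (X 0 * G')) * (1 + m2 * (X 0 * X 1)) * (1 + m2 * (X 1 * X 2))) * hL
      + ((1 + m2 * (X 0 * G')) * (1 + m2 * (X 1 * X 2))) * hA1
      + ((X 0 + X 1 - m1 * (X 0 * X 1)) + X 2 * (1 + m2 * (X 0 * X 1))
          - m1 * ((X 0 + X 1 - m1 * (X 0 * X 1)) * X 2)) * hB2
      - ((1 + m2 * (G * X 2)) * (1 + m2 * (X 0 * X 1)) * (1 + m2 * (X 1 * X 2))) * hR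
      - ((1 + m2 * (G * X 2)) * (1 + m2 * (X 0 * X 1))) * hA2
      - (X 0 * (1 + m2 * (X 1 * X 2)) + (X 1 + X 2 - m1 * (X 1 * X 2))
          - m1 * (X 0 * (X 1 + X 2 - m1 * (X 1 * X 2)))) * hB1
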